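/- Define 𝔉(X) = X − X Cᵀ (C X Cᵀ + R)⁻¹ C X with R > 0, and let α ≥ 1 be a scalar. Then for any X ≥ 0, 𝔉(αX) ≤ α·𝔉(X). -/

import Mathlib

open Matrix

lemma psd_smul_aux {k : ℕ} {A : Matrix (Fin k) (Fin k) ℝ} (hA : A.PosSemidef) {c : ℝ}
    (hc : 0 ≤ c) : (c • A).PosSemidef := by
  constructor
  · unfold Matrix.IsHermitian
    rw [conjTranspose_smul, hA.1]
    simp
  · intro x
    exact (hA.smul hc).2 x

lemma pd_smul_aux {k : ℕ} {A : Matrix (Fin k) (Fin k) ℝ} (hA : A.PosDef) {c : ℝ}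
    (hc : 0 < c) : (c • A).PosDef := by
  constructor
  · unfold Matrix.IsHermitian
    rw [conjTranspose_smul, hA.1]
    simp
  · intro x hx
    exact (hA.smul hc).2 hx

lemma inv_antitone_aux {k : ℕ} {A B : Matrix (Fin k) (Fin k) ℝ}
    (hA : A.PosDef) (hB : B.PosDef) (hAB : (B - A).PosSemidef) :
    (A⁻¹ - B⁻¹).PosSemidef := by
  haveI := hA.isUnit.invertible
  haveI := hB.isUnit.invertible
  haveI : Invertible A⁻¹ := hA.inv.isUnit.invertible
  have h1 : (fromBlocks B (1 : Matrix (Fin k) (Fin k) ℝ)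
      (1 : Matrix (Fin k) (Fin k) ℝ)ᴴ A⁻¹).PosSemidef := by
    rw [PosDef.fromBlocks₂₂ _ _ hA.inv]
    simpa [inv_inv_of_invertible] using hAB
  rw [PosDef.fromBlocks₁₁ _ _ hB] at h1
  simpa using h1

/-- Sub-homogeneity of the Riccati measurement-update map
`𝔉(X) = X − X Cᵀ (C X Cᵀ + R)⁻¹ C X`: for any scalar `α ≥ 1` and any `X ≥ 0`,
`𝔉(αX) ≤ α·𝔉(X)` in the Loewner order. -/
theorem riccati_update_subhomogeneous (n m : ℕ) (C : Matrix (Fin m) (Fin n) ℝ)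
    (R : Matrix (Fin m) (Fin m) ℝ) (hR : R.PosDef)
    (X : Matrix (Fin n) (Fin n) ℝ) (hX : X.PosSemidef) (α : ℝ) (hα : 1 ≤ α) :
    (α • (X - X * Cᵀ * (C * X * Cᵀ + R)⁻¹ * C * X)
      - ((α • X) - (α • X) * Cᵀ * (C * (α • X) * Cᵀ + R)⁻¹ * C * (α • X))).PosSemidef := by
  have hα0 : (0:ℝ) < α := lt_of_lt_of_le one_pos hα
  have hCt : Cᴴ = Cᵀ := conjTranspose_eq_transpose_of_trivial C
  have hS : (C * X * Cᵀ).PosSemidef := by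
    have := hX.mul_mul_conjTranspose_same C
    rwa [hCt] at this
  set S := C * X * Cᵀ with hSdef
  set A := S + α⁻¹ • R with hAdef
  set B := S + R with hBdef
  have hApd : A.PosDef := Matrix.PosDef.posSemidef_add hS (pd_smul_aux hR (by positivity))
  have hBpd : B.PosDef := Matrix.PosDef.posSemidef_add hS hR
  haveI := hApd.isUnit.invertible
  have hBA : (B - A).PosSemidef := by
    have : B - A = (1 - α⁻¹) • R := by
      rw [hAdef, hBdef]
      rw [sub_smul, one_smul]
      abel
    rw [this]
    exact psd_smul_aux hR.posSemidef (by
      have : α⁻¹ ≤ 1 := by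
        rw [inv_le_one_iff₀]; right; exact hα
      linarith)
  have hM : (A⁻¹ - B⁻¹).PosSemidef := inv_antitone_aux hApd hBpd hBA
  -- key rewriting
  have hSm : C * (α • X) * Cᵀ = α • S := by
    rw [hSdef, Matrix.mul_smul, Matrix.smul_mul]
  have hαA : C * (α • X) * Cᵀ + R = α • A := by
    rw [hSm, hAdef, smul_add, smul_smul, mul_inv_cancel₀ hα0.ne', one_smul]
  have hinv : (C * (α • X) * Cᵀ + R)⁻¹ = α⁻¹ • A⁻¹ := by
    rw [hαA]
    apply inv_eq_right_inv
    rw [Matrix.smul_mul, Matrix.mul_smul, smul_smul, mul_inv_cancel₀ hα0.ne',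
      one_smul, Matrix.mul_inv_of_invertible A]
  have hB' : (C * X * Cᵀ + R)⁻¹ = B⁻¹ := by rw [hBdef, hSdef]
  have hXt : (X * Cᵀ)ᴴ = C * X := by
    rw [conjTranspose_eq_transpose_of_trivial, transpose_mul, transpose_transpose,
      ← conjTranspose_eq_transpose_of_trivial, hX.1.eq]
  have key : α • (X - X * Cᵀ * (C * X * Cᵀ + R)⁻¹ * C * X)
      - ((α • X) - (α • X) * Cᵀ * (C * (α • X) * Cᵀ + R)⁻¹ * C * (α • X))
      = α • ((X * Cᵀ) * (A⁻¹ - B⁻¹) * (X * Cᵀ)ᴴ) := by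
    rw [hinv, hB', hXt]
    simp only [Matrix.smul_mul, Matrix.mul_smul, smul_smul, smul_sub, Matrix.sub_mul,
      Matrix.mul_sub, Matrix.mul_assoc]
    rw [inv_mul_cancel₀ hα0.ne', mul_one]
    abel
  rw [key]
  exact psd_smul_aux (hM.mul_mul_conjTranspose_same (X * Cᵀ)) hα0.le
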